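/- Let G be an n×m real matrix partitioned into column blocks G = [G^{(1)}, …, G^{(p)}], and suppose c_min I_m ≤ GᵀG/n ≤ c_max I_m with 0 < c_min ≤ c_max < ∞. Let I ⊆ {1,…,p} and let G^{(I)} (resp. G^{(Iᶜ)}) denote the submatrix formed by the column blocks indexed by I (resp. its complement Iᶜ). Then: (i) c_min I ≤ (G^{(I)})ᵀ G^{(I)} / n ≤ c_max I; and (ii) if U₁ and U₂ are matrices with orthonormal columns whose column spans equal the column spans of G^{(I)} and G^{(Iᶜ)} respectively, then the spectral norm satisfies ‖U₁ᵀ U₂‖ ≤ √(1 − c_min/c_max); equivalently, the minimal angle θ_min between the two column spans satisfies cos(θ_min) ≤ √(1 − c_min/c_max). -/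

import Mathlib

open Matrix

lemma aux_scalar17 (cmin cmax X Y C : ℝ) (h0 : 0 < cmin) (hcc : cmin ≤ cmax)
    (hX : 0 ≤ X) (hY : 0 ≤ Y)
    (h : ∀ t : ℝ, cmax * (2*t*C) ≤ (cmax - cmin) * (X + t^2*Y)) :
    C^2 ≤ (1 - cmin/cmax) * X * Y := by
  have hcm : 0 < cmax := lt_of_lt_of_le h0 hcc
  have hfact : (1 - cmin/cmax) = (cmax - cmin)/cmax := by field_simp
  rw [hfact, div_mul_eq_mul_div, div_mul_eq_mul_div, le_div_iff₀ hcm]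
  rcases eq_or_lt_of_le hY with hY0 | hYpos
  · have hC : C = 0 := by
      by_contra hC
      have ht := h (((cmax - cmin) * X / cmax + 1) / (2*C))
      rw [← hY0] at ht
      rw [(show cmax * (2 * ((((cmax - cmin) * X / cmax + 1) / (2*C))) * C)
          = (cmax - cmin) * X + cmax by field_simp)] at ht
      simp only [mul_zero, add_zero] at ht
      linarith
    rw [hC, ← hY0]
    norm_num
  · have kt := mul_le_mul_of_nonneg_right (h (C/Y)) hY
    have l1 : cmax * (2*(C/Y)*C)*Y = 2*cmax*C^2 := by field_simp
    have l2 : (cmax-cmin)*(X + (C/Y)^2*Y)*Y = (cmax-cmin)*(X*Y + C^2) := by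
      field_simp
    rw [l1, l2] at kt
    nlinarith [mul_nonneg h0.le (sq_nonneg C)]

/-- extension by (signed) zero-padding -/
def auxW17 {p : ℕ} {k : Fin p → ℕ} (I : Finset (Fin p))
    (a : {x : (i : Fin p) × Fin (k i) // x.1 ∈ I} → ℝ)
    (b : {x : (i : Fin p) × Fin (k i) // x.1 ∉ I} → ℝ) (t : ℝ) :
    ((i : Fin p) × Fin (k i)) → ℝ :=
  fun s => if h : s.1 ∈ I then a ⟨s, h⟩ else -t * b ⟨s, h⟩

lemma aux_split17 {p : ℕ} {k : Fin p → ℕ} (I : Finset (Fin p))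
    (f : ((i : Fin p) × Fin (k i)) → ℝ) :
    ∑ s, f s = (∑ s : {x : (i : Fin p) × Fin (k i) // x.1 ∈ I}, f s.val)
      + ∑ s : {x : (i : Fin p) × Fin (k i) // x.1 ∉ I}, f s.val := by
  rw [← Finset.sum_filter_add_sum_filter_not Finset.univ (fun s => s.1 ∈ I)]
  congr 1
  · exact Finset.sum_subtype _ (by simp) _
  · exact Finset.sum_subtype _ (by simp) _

lemma aux_mulVec17 {n p : ℕ} {k : Fin p → ℕ}
    (G : Matrix (Fin n) ((i : Fin p) × Fin (k i)) ℝ) (I : Finset (Fin p))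
    (a : {x : (i : Fin p) × Fin (k i) // x.1 ∈ I} → ℝ)
    (b : {x : (i : Fin p) × Fin (k i) // x.1 ∉ I} → ℝ) (t : ℝ) :
    G *ᵥ (auxW17 I a b t) = (G.submatrix id Subtype.val *ᵥ a)
      + (-t) • (G.submatrix id Subtype.val *ᵥ b) := by
  funext j
  simp only [mulVec, dotProduct, Pi.add_apply, Pi.smul_apply, smul_eq_mul,
    submatrix_apply, id_eq]
  rw [aux_split17 I (fun s => G j s * auxW17 I a b t s)]
  congr 1
  · apply Finset.sum_congr rfl
    intro s _
    simp [auxW17, s.2]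
  · rw [Finset.mul_sum]
    apply Finset.sum_congr rfl
    intro s _
    simp only [auxW17, s.2, dif_neg, not_false_iff]
    ring

lemma aux_dot17 {p : ℕ} {k : Fin p → ℕ} (I : Finset (Fin p))
    (a : {x : (i : Fin p) × Fin (k i) // x.1 ∈ I} → ℝ)
    (b : {x : (i : Fin p) × Fin (k i) // x.1 ∉ I} → ℝ) (t : ℝ) :
    (auxW17 I a b t) ⬝ᵥ (auxW17 I a b t) = a ⬝ᵥ a + t^2 * (b ⬝ᵥ b) := by
  simp only [dotProduct]
  rw [aux_split17 I (fun s => auxW17 I a b t s * auxW17 I a b t s), Finset.mul_sum]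
  congr 1
  · apply Finset.sum_congr rfl
    intro s _
    simp [auxW17, s.2]
  · apply Finset.sum_congr rfl
    intro s _
    simp only [auxW17, s.2, dif_neg, not_false_iff]
    ring

lemma aux_key17 {n p : ℕ} {k : Fin p → ℕ}
    (G : Matrix (Fin n) ((i : Fin p) × Fin (k i)) ℝ)
    (cmin cmax : ℝ) (h0 : 0 < cmin) (hcc : cmin ≤ cmax)
    (hq1 : ∀ w, cmin * (w ⬝ᵥ w) ≤ (n:ℝ)⁻¹ * ((G *ᵥ w) ⬝ᵥ (G *ᵥ w)))
    (hq2 : ∀ w, (n:ℝ)⁻¹ * ((G *ᵥ w) ⬝ᵥ (G *ᵥ w)) ≤ cmax * (w ⬝ᵥ w))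
    (I : Finset (Fin p))
    (a : {x : (i : Fin p) × Fin (k i) // x.1 ∈ I} → ℝ)
    (b : {x : (i : Fin p) × Fin (k i) // x.1 ∉ I} → ℝ) :
    ((G.submatrix id Subtype.val *ᵥ a) ⬝ᵥ (G.submatrix id Subtype.val *ᵥ b))^2 ≤
      (1 - cmin/cmax) *
        ((G.submatrix id Subtype.val *ᵥ a) ⬝ᵥ (G.submatrix id Subtype.val *ᵥ a)) *
        ((G.submatrix id Subtype.val *ᵥ b) ⬝ᵥ (G.submatrix id Subtype.val *ᵥ b)) := by
  set x := G.submatrix id (Subtype.val : {x : (i : Fin p) × Fin (k i) // x.1 ∈ I} → _) *ᵥ a with hx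
  set y := G.submatrix id (Subtype.val : {x : (i : Fin p) × Fin (k i) // x.1 ∉ I} → _) *ᵥ b with hy
  rcases Nat.eq_zero_or_pos n with hn | hn
  · subst hn
    simp [dotProduct]
  · have hα : (0:ℝ) < (n:ℝ)⁻¹ := by positivity
    have hdx : ∀ z : Fin n → ℝ, 0 ≤ z ⬝ᵥ z :=
      fun z => Finset.sum_nonneg fun i _ => mul_self_nonneg _
    apply aux_scalar17 cmin cmax _ _ _ h0 hcc (hdx x) (hdx y)
    intro t
    have hGw : ∀ t : ℝ, (G *ᵥ auxW17 I a b t) ⬝ᵥ (G *ᵥ auxW17 I a b t)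
        = x ⬝ᵥ x - 2*t*(x ⬝ᵥ y) + t^2 * (y ⬝ᵥ y) := by
      intro t
      rw [aux_mulVec17, ← hx, ← hy]
      simp only [dotProduct, Pi.add_apply, Pi.smul_apply, smul_eq_mul, Finset.mul_sum,
        ← Finset.sum_sub_distrib, ← Finset.sum_add_distrib]
      exact Finset.sum_congr rfl fun i _ => by ring
    have h1 := hq1 (auxW17 I a b t)
    have h2 := hq2 (auxW17 I a b 0)
    have h3 := hq2 (auxW17 I (0 : {x : (i : Fin p) × Fin (k i) // x.1 ∈ I} → ℝ) b (-1))
    rw [aux_dot17, hGw] at h1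
    rw [aux_dot17, hGw] at h2
    rw [aux_dot17, aux_mulVec17] at h3
    norm_num [Matrix.mulVec_zero] at h2 h3
    rw [← hy] at h3
    have hcmax : (0:ℝ) < cmax := lt_of_lt_of_le h0 hcc
    have hmain : (n:ℝ)⁻¹ * (cmax * (2*t*(x ⬝ᵥ y)))
        ≤ (n:ℝ)⁻¹ * ((cmax - cmin) * ((x ⬝ᵥ x) + t^2*(y ⬝ᵥ y))) := by
      nlinarith [mul_le_mul_of_nonneg_left h2 h0.le,
        mul_le_mul_of_nonneg_left h3 (mul_nonneg h0.le (sq_nonneg t)),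
        mul_le_mul_of_nonneg_left h1 hcmax.le]
    exact (mul_le_mul_iff_right₀ hα).mp hmain

/-- If `c_min I ≤ GᵀG/n ≤ c_max I`, then (i) the same Loewner bounds hold for every column
block submatrix `G^{(I)}`, and (ii) the minimal angle between the column spans of `G^{(I)}`
and `G^{(Iᶜ)}` satisfies `cos(θ_min) = ‖U₁ᵀU₂‖ ≤ √(1 − c_min/c_max)`. -/
theorem stmt_17 (n p : ℕ) (k : Fin p → ℕ)
    (G : Matrix (Fin n) ((i : Fin p) × Fin (k i)) ℝ)
    (cmin cmax : ℝ) (h0 : 0 < cmin) (hcc : cmin ≤ cmax)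
    (hlow : (((n : ℝ))⁻¹ • (Gᵀ * G) -
      cmin • (1 : Matrix ((i : Fin p) × Fin (k i)) ((i : Fin p) × Fin (k i)) ℝ)).PosSemidef)
    (hup : (cmax • (1 : Matrix ((i : Fin p) × Fin (k i)) ((i : Fin p) × Fin (k i)) ℝ) -
      ((n : ℝ))⁻¹ • (Gᵀ * G)).PosSemidef)
    (I : Finset (Fin p))
    (GI : Matrix (Fin n) {x : (i : Fin p) × Fin (k i) // x.1 ∈ I} ℝ)
    (hGI : GI = G.submatrix id Subtype.val)
    (GIc : Matrix (Fin n) {x : (i : Fin p) × Fin (k i) // x.1 ∉ I} ℝ)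
    (hGIc : GIc = G.submatrix id Subtype.val) :
    ((((n : ℝ))⁻¹ • (GIᵀ * GI) - cmin • (1 : Matrix {x : (i : Fin p) × Fin (k i) // x.1 ∈ I}
        {x : (i : Fin p) × Fin (k i) // x.1 ∈ I} ℝ)).PosSemidef ∧
      (cmax • (1 : Matrix {x : (i : Fin p) × Fin (k i) // x.1 ∈ I}
        {x : (i : Fin p) × Fin (k i) // x.1 ∈ I} ℝ) - ((n : ℝ))⁻¹ • (GIᵀ * GI)).PosSemidef) ∧
      (∀ (r₁ r₂ : ℕ) (U₁ : Matrix (Fin n) (Fin r₁) ℝ) (U₂ : Matrix (Fin n) (Fin r₂) ℝ),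
        U₁ᵀ * U₁ = 1 → U₂ᵀ * U₂ = 1 →
        Submodule.span ℝ (Set.range fun j => U₁ᵀ j) =
          Submodule.span ℝ (Set.range fun x => GIᵀ x) →
        Submodule.span ℝ (Set.range fun j => U₂ᵀ j) =
          Submodule.span ℝ (Set.range fun x => GIcᵀ x) →
        ‖LinearMap.toContinuousLinearMap (Matrix.toEuclideanLin (U₁ᵀ * U₂))‖ ≤
          Real.sqrt (1 - cmin / cmax)) := by
  subst hGI hGIc
  have hcmax : (0:ℝ) < cmax := lt_of_lt_of_le h0 hcc
  constructor
  · constructor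
    · have hmeq : (((n : ℝ))⁻¹ • ((G.submatrix id
          (Subtype.val : {x : (i : Fin p) × Fin (k i) // x.1 ∈ I} → _))ᵀ *
            G.submatrix id Subtype.val) - cmin • (1 : Matrix {x : (i : Fin p) × Fin (k i) // x.1 ∈ I}
        {x : (i : Fin p) × Fin (k i) // x.1 ∈ I} ℝ))
          = (((n : ℝ))⁻¹ • (Gᵀ * G) - cmin • 1).submatrix Subtype.val Subtype.val := by
        ext x y
        simp only [Matrix.sub_apply, Matrix.smul_apply, Matrix.mul_apply,
          Matrix.transpose_apply, Matrix.submatrix_apply, Matrix.one_apply, id_eq,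
          smul_eq_mul, Subtype.ext_iff]
      rw [hmeq]
      exact hlow.submatrix _
    · have hmeq : (cmax • (1 : Matrix {x : (i : Fin p) × Fin (k i) // x.1 ∈ I}
        {x : (i : Fin p) × Fin (k i) // x.1 ∈ I} ℝ) - ((n : ℝ))⁻¹ • ((G.submatrix id
          (Subtype.val : {x : (i : Fin p) × Fin (k i) // x.1 ∈ I} → _))ᵀ *
            G.submatrix id Subtype.val))
          = (cmax • 1 - ((n : ℝ))⁻¹ • (Gᵀ * G)).submatrix Subtype.val Subtype.val := by
        ext x y
        simp only [Matrix.sub_apply, Matrix.smul_apply, Matrix.mul_apply,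
          Matrix.transpose_apply, Matrix.submatrix_apply, Matrix.one_apply, id_eq,
          smul_eq_mul, Subtype.ext_iff]
      rw [hmeq]
      exact hup.submatrix _
  · intro r₁ r₂ U₁ U₂ hU₁ hU₂ hs₁ hs₂
    have hq1 : ∀ w, cmin * (w ⬝ᵥ w) ≤ (n:ℝ)⁻¹ * ((G *ᵥ w) ⬝ᵥ (G *ᵥ w)) := by
      intro w
      have h := hlow.dotProduct_mulVec_nonneg w
      rw [star_trivial, sub_mulVec, smul_mulVec, smul_mulVec, one_mulVec,
        dotProduct_sub, dotProduct_smul, dotProduct_smul, ← mulVec_mulVec,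
        dotProduct_mulVec, vecMul_transpose] at h
      simp only [smul_eq_mul] at h
      linarith
    have hq2 : ∀ w, (n:ℝ)⁻¹ * ((G *ᵥ w) ⬝ᵥ (G *ᵥ w)) ≤ cmax * (w ⬝ᵥ w) := by
      intro w
      have h := hup.dotProduct_mulVec_nonneg w
      rw [star_trivial, sub_mulVec, smul_mulVec, smul_mulVec, one_mulVec,
        dotProduct_sub, dotProduct_smul, dotProduct_smul, ← mulVec_mulVec,
        dotProduct_mulVec, vecMul_transpose] at h
      simp only [smul_eq_mul] at h
      linarith
    -- representation of vectors in the column spans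
    have hrep : ∀ {r : ℕ} (U : Matrix (Fin n) (Fin r) ℝ) {m : Type}
        [Fintype m] (B : Matrix (Fin n) m ℝ),
        Submodule.span ℝ (Set.range fun j => Uᵀ j) =
          Submodule.span ℝ (Set.range fun x => Bᵀ x) →
        ∀ u : Fin r → ℝ, ∃ a, U *ᵥ u = B *ᵥ a := by
      intro r U m _ B hs u
      have hx : U *ᵥ u ∈ Submodule.span ℝ (Set.range fun x => Bᵀ x) := by
        rw [← hs, Submodule.mem_span_range_iff_exists_fun]
        exact ⟨u, by funext j; simp [mulVec, dotProduct, mul_comm]⟩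
      rw [Submodule.mem_span_range_iff_exists_fun] at hx
      obtain ⟨a, ha⟩ := hx
      exact ⟨a, by rw [← ha]; funext j; simp [mulVec, dotProduct, mul_comm]⟩
    have hortho : ∀ {r : ℕ} (U : Matrix (Fin n) (Fin r) ℝ), Uᵀ * U = 1 →
        ∀ u v : Fin r → ℝ, (U *ᵥ u) ⬝ᵥ (U *ᵥ v) = u ⬝ᵥ v := by
      intro r U hU u v
      rw [dotProduct_mulVec, ← vecMul_transpose, vecMul_vecMul, hU, vecMul_one]
    -- operator norm bound
    apply ContinuousLinearMap.opNorm_le_bound _ (Real.sqrt_nonneg _)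
    intro v
    set M := U₁ᵀ * U₂ with hM
    set v' : Fin r₂ → ℝ := WithLp.equiv 2 _ v with hv'
    have hnorm1 : ‖LinearMap.toContinuousLinearMap (Matrix.toEuclideanLin M) v‖
        = Real.sqrt ((M *ᵥ v') ⬝ᵥ (M *ᵥ v')) := by
      rw [LinearMap.coe_toContinuousLinearMap', EuclideanSpace.norm_eq]
      congr 1
      simp [toEuclideanLin_apply, dotProduct, Real.norm_eq_abs, sq_abs, sq]
      rfl
    have hnorm2 : ‖v‖ = Real.sqrt (v' ⬝ᵥ v') := by
      rw [EuclideanSpace.norm_eq]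
      congr 1
      simp only [dotProduct, Real.norm_eq_abs, sq, abs_mul_abs_self]
      rfl
    rw [hnorm1, hnorm2]
    obtain ⟨a, ha⟩ := hrep U₁ (G.submatrix id Subtype.val) hs₁ (M *ᵥ v')
    obtain ⟨b, hb⟩ := hrep U₂ (G.submatrix id Subtype.val) hs₂ v'
    have key := aux_key17 G cmin cmax h0 hcc hq1 hq2 I a b
    rw [← ha, ← hb] at key
    have hC : (U₁ *ᵥ (M *ᵥ v')) ⬝ᵥ (U₂ *ᵥ v') = (M *ᵥ v') ⬝ᵥ (M *ᵥ v') := by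
      rw [dotProduct_mulVec, ← vecMul_transpose, vecMul_vecMul, hM, dotProduct_mulVec]
    have hX := hortho U₁ hU₁ (M *ᵥ v') (M *ᵥ v')
    have hY := hortho U₂ hU₂ v' v'
    rw [hC, hX, hY] at key
    -- now key : s^2 ≤ (1 - cmin/cmax) * s * V with s = Mv'⬝Mv', V = v'⬝v'
    set s := (M *ᵥ v') ⬝ᵥ (M *ᵥ v') with hs
    set V := v' ⬝ᵥ v' with hV
    have hs0 : 0 ≤ s := Finset.sum_nonneg fun i _ => mul_self_nonneg _
    have hV0 : 0 ≤ V := Finset.sum_nonneg fun i _ => mul_self_nonneg _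
    rcases eq_or_lt_of_le hs0 with hseq | hspos
    · rw [← hseq]
      simp [Real.sqrt_nonneg, mul_nonneg (Real.sqrt_nonneg _) (Real.sqrt_nonneg _)]
    · have hsle : s ≤ (1 - cmin/cmax) * V := by
        have : s * s ≤ ((1 - cmin/cmax) * V) * s := by nlinarith [key]
        exact le_of_mul_le_mul_right this hspos
      calc Real.sqrt s ≤ Real.sqrt ((1 - cmin/cmax) * V) := Real.sqrt_le_sqrt hsle
        _ = Real.sqrt (1 - cmin/cmax) * Real.sqrt V := Real.sqrt_mul (by
            have : cmin / cmax ≤ 1 := (div_le_one hcmax).2 hcc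
            linarith) _
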